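/- arXiv:1704.03122 — 2 statements merged into one kernel-verified Lean document; each statement's English description precedes it below -/
import Mathlib

section
/- Let G be a connected simple graph on n vertices with distance Laplacian eigenvalues ∂L_1 ≥ ⋯ ≥ ∂L_{n−1} ≥ ∂L_n = 0. Then ∂L_{n−1} ≥ n, and ∂L_{n−1} = n if and only if the complement of G is disconnected. Furthermore, the multiplicity of n as a distance Laplacian eigenvalue of G equals one less than the number of connected components of the complement of G. -/
open Matrix

/-- The distance Laplacian matrix of a graph: diagonal entries are the transmissions
`Tr(v) = ∑ u, d(v,u)`, off-diagonal entries are `-d(u,v)`. -/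
noncomputable def distLaplacian {V : Type*} [Fintype V] [DecidableEq V]
    (G : SimpleGraph V) : Matrix V V ℝ :=
  Matrix.of fun i j => if i = j then ∑ k : V, (G.dist i k : ℝ) else -(G.dist i j : ℝ)

/-- The multiplicity of `μ` as an eigenvalue of `M`, i.e. the dimension of the
corresponding eigenspace. -/
noncomputable def eigMult {V : Type*} [Fintype V] (M : Matrix V V ℝ) (μ : ℝ) : ℕ :=
  Module.finrank ℝ (Module.End.eigenspace M.mulVecLin μ)

/-- The largest eigenvalue of a matrix. -/
noncomputable def lambdaMax {V : Type*} [Fintype V] (M : Matrix V V ℝ) : ℝ :=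
  sSup {μ : ℝ | Module.End.HasEigenvalue M.mulVecLin μ}

/-- The transmission of a vertex. -/
noncomputable def transmission {V : Type*} [Fintype V] (G : SimpleGraph V) (v : V) : ℕ :=
  ∑ u : V, G.dist v u

/-- The distance Laplacian eigenvalues of `G`, with multiplicity, sorted in
nondecreasing order (so `∂ᴸ_n = head` and `∂ᴸ₁ = last`). -/
noncomputable def distLapEigsAsc {V : Type*} [Fintype V] [DecidableEq V]
    (G : SimpleGraph V) : List ℝ :=
  (distLaplacian G).charpoly.roots.sort (· ≤ ·)

set_option maxHeartbeats 1000000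
set_option synthInstance.maxHeartbeats 400000
set_option linter.unusedSectionVars false

section SpectralAux

open Polynomial

lemma aux_charpoly_conj {m : Type*} [Fintype m] [DecidableEq m] (U D : Matrix m m ℝ)
    (h1 : U * star U = 1) : (U * D * star U).charpoly = D.charpoly := by
  have key : charmatrix (U * D * star U) =
      U.map C * charmatrix D * (star U).map C := by
    rw [charmatrix, charmatrix]
    rw [Matrix.mul_sub, Matrix.sub_mul]
    congr 1
    · symm
      calc U.map C * Matrix.scalar m (X : ℝ[X]) * (star U).map C
          = U.map C * ((star U).map C * Matrix.scalar m (X : ℝ[X])) := by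
            rw [mul_assoc,
              (Matrix.scalar_commute (X : ℝ[X]) (fun r' => Commute.all _ _) ((star U).map C)).eq]
        _ = (U * star U).map C * Matrix.scalar m (X : ℝ[X]) := by
            rw [← mul_assoc, ← Matrix.map_mul]
        _ = Matrix.scalar m (X : ℝ[X]) := by
            rw [h1, Matrix.map_one _ (map_zero C) (map_one C), one_mul]
    · simp only [RingHom.mapMatrix_apply, Matrix.map_mul]
  rw [Matrix.charpoly, Matrix.charpoly, key, det_mul, det_mul, mul_comm, ← mul_assoc, ← det_mul,
    ← Matrix.map_mul]
  have h2 : star U * U = 1 := mul_eq_one_comm.mp h1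
  rw [h2, Matrix.map_one _ (map_zero C) (map_one C), det_one, one_mul]

lemma aux_charpoly_herm {m : Type*} [Fintype m] [DecidableEq m] [LinearOrder m]
    {A : Matrix m m ℝ} (hA : A.IsHermitian) :
    A.charpoly = ∏ i, (X - C (hA.eigenvalues i)) := by
  have hU : (hA.eigenvectorUnitary : Matrix m m ℝ) *
      star (hA.eigenvectorUnitary : Matrix m m ℝ) = 1 :=
    Matrix.mem_unitaryGroup_iff.mp hA.eigenvectorUnitary.2
  have hsp := hA.spectral_theorem
  have hdiag : (diagonal (RCLike.ofReal ∘ hA.eigenvalues) : Matrix m m ℝ)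
      = diagonal hA.eigenvalues := by
    congr 1
  rw [show A.charpoly = ((hA.eigenvectorUnitary : Matrix m m ℝ)
      * diagonal (RCLike.ofReal ∘ hA.eigenvalues)
      * star (hA.eigenvectorUnitary : Matrix m m ℝ)).charpoly from by
        conv_lhs => rw [hsp]
        rw [Unitary.conjStarAlgAut_apply],
    aux_charpoly_conj _ _ hU, hdiag,
    Matrix.charpoly_of_upperTriangular _ (Matrix.blockTriangular_diagonal _)]
  simp

lemma aux_roots_herm {m : Type*} [Fintype m] [DecidableEq m] [LinearOrder m]
    {A : Matrix m m ℝ} (hA : A.IsHermitian) :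
    A.charpoly.roots = Multiset.map hA.eigenvalues Finset.univ.val := by
  rw [aux_charpoly_herm hA]
  rw [Finset.prod_eq_multiset_prod]
  rw [show Multiset.map (fun i => X - C (hA.eigenvalues i)) Finset.univ.val
      = Multiset.map (fun a => X - C a) (Multiset.map hA.eigenvalues Finset.univ.val) by
    rw [Multiset.map_map]; rfl]
  exact roots_multiset_prod_X_sub_C _

lemma aux_eig_finrank {m : Type*} [Fintype m] [DecidableEq m] {W : Type*} [AddCommGroup W]
    [Module ℝ W] (b : Module.Basis m ℝ W) (f : Module.End ℝ W) (ev : m → ℝ)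
    (hf : ∀ i, f (b i) = ev i • b i) (μ : ℝ) :
    Module.finrank ℝ (Module.End.eigenspace f μ) =
      (Finset.univ.filter (fun i => ev i = μ)).card := by
  classical
  have hspan : Module.End.eigenspace f μ = Submodule.span ℝ (b '' {i | ev i = μ}) := by
    ext x
    rw [Module.End.mem_eigenspace_iff, Module.Basis.mem_span_image]
    constructor
    · intro hx j hj
      simp only [Set.mem_setOf_eq]
      by_contra hne
      have h1 : f x = ∑ i, (ev i * b.repr x i) • b i := by
        conv_lhs => rw [← b.sum_repr x]
        rw [map_sum]
        refine Finset.sum_congr rfl fun i _ => ?_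
        rw [_root_.map_smul, hf, smul_smul, mul_comm]
      have h2 : (μ • x) = ∑ i, (μ * b.repr x i) • b i := by
        conv_lhs => rw [← b.sum_repr x]
        rw [Finset.smul_sum]
        refine Finset.sum_congr rfl fun i _ => ?_
        rw [smul_smul]
      rw [h1, h2] at hx
      have hx' : (fun i => ev i * b.repr x i) = (fun i => μ * b.repr x i) := by
        rw [← b.repr_sum_self (fun i => ev i * b.repr x i),
          ← b.repr_sum_self (fun i => μ * b.repr x i), hx]
      have hj' : b.repr x j ≠ 0 := Finsupp.mem_support_iff.mp hj
      exact hne (mul_right_cancel₀ hj' (congrFun hx' j))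
    · intro hsupp
      conv_lhs => rw [← b.sum_repr x]
      conv_rhs => rw [← b.sum_repr x]
      rw [map_sum, Finset.smul_sum]
      refine Finset.sum_congr rfl fun i _ => ?_
      rw [_root_.map_smul, hf, smul_smul, smul_smul]
      by_cases hi : ev i = μ
      · rw [hi, mul_comm]
      · have h0 : b.repr x i = 0 := by
          by_contra hne
          exact hi (hsupp (Finsupp.mem_support_iff.mpr hne))
        rw [h0, zero_mul, mul_zero]
  rw [hspan]
  have hli : LinearIndependent ℝ ((↑) : (b '' {i | ev i = μ}) → W) :=
    LinearIndepOn.id_image (b.linearIndependent.comp ((↑) : {i | ev i = μ} → m) Subtype.val_injective)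
  have hfin : Fintype (b '' {i | ev i = μ}) := Set.Finite.fintype (Set.toFinite _)
  rw [finrank_span_set_eq_card hli]
  rw [Set.toFinset_image]
  rw [Finset.card_image_of_injective _ b.injective]
  congr 1
  ext i
  simp

lemma aux_count {m : Type*} [Fintype m] [DecidableEq m] [LinearOrder m]
    {A : Matrix m m ℝ} (hA : A.IsHermitian) (μ : ℝ) :
    A.charpoly.roots.count μ =
      Module.finrank ℝ (Module.End.eigenspace A.mulVecLin μ) := by
  classical
  have hroots : A.charpoly.roots = Multiset.map hA.eigenvalues Finset.univ.val :=
    aux_roots_herm hA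
  rw [hroots, Multiset.count_map]
  let b : Module.Basis m ℝ (m → ℝ) :=
    (hA.eigenvectorBasis.toBasis).map (WithLp.linearEquiv 2 ℝ (m → ℝ))
  have hb : ∀ i, b i = ⇑(hA.eigenvectorBasis i) := by
    intro i
    simp [b, Module.Basis.map_apply]
  have hf : ∀ i, A.mulVecLin (b i) = hA.eigenvalues i • b i := by
    intro i
    rw [hb, Matrix.mulVecLin_apply, hA.mulVec_eigenvectorBasis]
  rw [aux_eig_finrank b A.mulVecLin hA.eigenvalues hf μ]
  have : Multiset.filter (fun a => μ = hA.eigenvalues a) Finset.univ.val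
      = (Finset.univ.filter (fun a => μ = hA.eigenvalues a)).val := rfl
  rw [this, ← Finset.card, Finset.card_filter]
  simp [eq_comm]

end SpectralAux

section GraphAux

variable {V : Type*} [Fintype V] [DecidableEq V] (G : SimpleGraph V)

lemma dl_herm : (distLaplacian G).IsHermitian := by
  ext i j
  simp only [distLaplacian, conjTranspose_apply, of_apply, star_trivial]
  by_cases h : i = j
  · subst h; simp
  · rw [if_neg h, if_neg fun h' => h h'.symm, SimpleGraph.dist_comm]

lemma dl_mulVec (x : V → ℝ) (i : V) :
    (distLaplacian G *ᵥ x) i = ∑ k, (G.dist i k : ℝ) * (x i - x k) := by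
  have : ∀ j, (if i = j then ∑ k : V, (G.dist i k : ℝ) else -(G.dist i j : ℝ)) * x j
      = (if i = j then (∑ k : V, (G.dist i k : ℝ)) * x i + (G.dist i j : ℝ) * x j else 0)
        - (G.dist i j : ℝ) * x j := by
    intro j
    by_cases h : i = j
    · subst h; rw [if_pos rfl, if_pos rfl]; simp [SimpleGraph.dist_self]
    · rw [if_neg h, if_neg h]; ring
  simp only [mulVec, dotProduct, distLaplacian, of_apply]
  rw [Finset.sum_congr rfl fun j _ => this j, Finset.sum_sub_distrib, Finset.sum_ite_eq]
  simp only [Finset.mem_univ, if_pos, SimpleGraph.dist_self, Nat.cast_zero, zero_mul, add_zero]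
  rw [Finset.sum_mul, ← Finset.sum_sub_distrib]
  exact Finset.sum_congr rfl fun k _ => by ring

lemma aux_quad (w : V → V → ℝ) (hw : ∀ i j, w i j = w j i) (x : V → ℝ) :
    ∑ i, ∑ k, w i k * (x i - x k) * x i = (∑ i, ∑ k, w i k * (x i - x k)^2) / 2 := by
  have h1 : ∑ i, ∑ k, w i k * (x k - x i) * x k = ∑ i, ∑ k, w i k * (x i - x k) * x i := by
    rw [Finset.sum_comm]
    exact Finset.sum_congr rfl fun j _ => Finset.sum_congr rfl fun i _ => by rw [hw]
  have h2 : ∑ i, ∑ k, (w i k * (x i - x k) * x i + w i k * (x k - x i) * x k)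
      = ∑ i, ∑ k, w i k * (x i - x k)^2 :=
    Finset.sum_congr rfl fun i _ => Finset.sum_congr rfl fun k _ => by ring
  simp only [Finset.sum_add_distrib] at h2
  linarith

lemma dl_dot (x : V → ℝ) :
    x ⬝ᵥ (distLaplacian G *ᵥ x) = (∑ i, ∑ k, (G.dist i k : ℝ) * (x i - x k)^2) / 2 := by
  have : x ⬝ᵥ (distLaplacian G *ᵥ x) = ∑ i, ∑ k, (G.dist i k : ℝ) * (x i - x k) * x i := by
    simp only [dotProduct, dl_mulVec, Finset.mul_sum]
    exact Finset.sum_congr rfl fun i _ => Finset.sum_congr rfl fun k _ => by ring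
  rw [this, aux_quad _ (fun i j => by rw [SimpleGraph.dist_comm]) x]

lemma dl_sum (x : V → ℝ) : ∑ i, (distLaplacian G *ᵥ x) i = 0 := by
  simp only [dl_mulVec, mul_sub]
  simp only [Finset.sum_sub_distrib]
  rw [sub_eq_zero]
  rw [Finset.sum_comm]
  exact Finset.sum_congr rfl fun j _ => Finset.sum_congr rfl fun i _ => by
    rw [SimpleGraph.dist_comm]

lemma aux_u (x : V → ℝ) :
    ∑ i, ∑ k, (if i = k then (0:ℝ) else 1) * (x i - x k)^2
      = 2 * ((Fintype.card V) * (∑ i, x i^2) - (∑ i, x i)^2) := by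
  have h1 : ∀ i k : V, (if i = k then (0:ℝ) else 1) * (x i - x k)^2 = (x i - x k)^2 := by
    intro i k; by_cases h : i = k
    · subst h; simp
    · rw [if_neg h, one_mul]
  have h2 : ∀ i : V, ∑ k, (x i - x k)^2
      = (Fintype.card V) * x i^2 - (2 * x i) * (∑ k, x k) + ∑ k, x k^2 := by
    intro i
    have e : ∀ k : V, (x i - x k)^2 = x i^2 - (2 * x i) * x k + x k^2 := fun k => by ring
    rw [Finset.sum_congr rfl fun k _ => e k, Finset.sum_add_distrib, Finset.sum_sub_distrib,
      Finset.sum_const, Finset.card_univ, nsmul_eq_mul, ← Finset.mul_sum]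
  calc ∑ i, ∑ k, (if i = k then (0:ℝ) else 1) * (x i - x k)^2
      = ∑ i : V, ((Fintype.card V) * x i^2 - (2 * x i) * (∑ k, x k) + ∑ k, x k^2) := by
        refine Finset.sum_congr rfl fun i _ => ?_
        rw [Finset.sum_congr rfl fun k _ => h1 i k, h2 i]
    _ = 2 * ((Fintype.card V) * (∑ i, x i^2) - (∑ i, x i)^2) := by
        rw [Finset.sum_add_distrib, Finset.sum_sub_distrib, ← Finset.mul_sum, ← Finset.sum_mul,
          ← Finset.mul_sum, Finset.sum_const, Finset.card_univ, nsmul_eq_mul]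
        ring

lemma dl_dot_split (x : V → ℝ) :
    x ⬝ᵥ (distLaplacian G *ᵥ x)
      = (Fintype.card V) * (∑ i, x i^2) - (∑ i, x i)^2
        + (∑ i, ∑ k, ((G.dist i k : ℝ) - if i = k then 0 else 1) * (x i - x k)^2) / 2 := by
  rw [dl_dot]
  have e : ∀ i k : V, (G.dist i k : ℝ) * (x i - x k)^2
      = (if i = k then (0:ℝ) else 1) * (x i - x k)^2
        + ((G.dist i k : ℝ) - if i = k then 0 else 1) * (x i - x k)^2 := fun i k => by ring
  rw [Finset.sum_congr rfl fun i _ => Finset.sum_congr rfl fun k _ => e i k]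
  simp only [Finset.sum_add_distrib]
  rw [aux_u]
  ring

variable {G}

lemma dl_dist_one_le (hG : G.Connected) {i k : V} (h : i ≠ k) : 1 ≤ (G.dist i k : ℝ) := by
  exact_mod_cast Nat.one_le_cast.mpr (hG.pos_dist_of_ne h)

lemma dl_dist_two_le (hG : G.Connected) {i k : V} (h : Gᶜ.Adj i k) : 2 ≤ (G.dist i k : ℝ) := by
  obtain ⟨hne, hnadj⟩ := (SimpleGraph.compl_adj G i k).mp h
  have h0 : G.dist i k ≠ 0 := Nat.pos_iff_ne_zero.mp (hG.pos_dist_of_ne hne)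
  have h1 : G.dist i k ≠ 1 := fun hh => hnadj (SimpleGraph.dist_eq_one_iff_adj.mp hh)
  have : 2 ≤ G.dist i k := by omega
  exact_mod_cast this

lemma dl_e_nonneg (hG : G.Connected) (i k : V) :
    0 ≤ (G.dist i k : ℝ) - if i = k then 0 else 1 := by
  by_cases h : i = k
  · subst h; simp [SimpleGraph.dist_self]
  · rw [if_neg h]; linarith [dl_dist_one_le hG h]

lemma dl_ker (hG : G.Connected) (x : V → ℝ) :
    distLaplacian G *ᵥ x = 0 ↔ ∀ i j : V, x i = x j := by
  constructor
  · intro h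
    have hq : (∑ i, ∑ k, (G.dist i k : ℝ) * (x i - x k)^2) / 2 = 0 := by
      rw [← dl_dot, h, dotProduct_zero]
    have hnn : ∀ i k : V, 0 ≤ (G.dist i k : ℝ) * (x i - x k)^2 :=
      fun i k => mul_nonneg (Nat.cast_nonneg _) (sq_nonneg _)
    have hQ : ∑ i : V, ∑ k : V, (G.dist i k : ℝ) * (x i - x k)^2 = 0 := by linarith
    intro i j
    by_cases hij : i = j
    · rw [hij]
    · have h0 : (G.dist i j : ℝ) * (x i - x j)^2 = 0 := by
        have houter := (Finset.sum_eq_zero_iff_of_nonneg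
          (fun a _ => Finset.sum_nonneg fun k _ => hnn a k)).mp hQ i (Finset.mem_univ i)
        exact (Finset.sum_eq_zero_iff_of_nonneg (fun k _ => hnn i k)).mp houter j (Finset.mem_univ j)
      have hdp : 0 < (G.dist i j : ℝ) := by linarith [dl_dist_one_le hG hij]
      have := (mul_eq_zero.mp h0).resolve_left (ne_of_gt hdp)
      exact sub_eq_zero.mp (sq_eq_zero_iff.mp this)
  · intro h
    funext i
    rw [dl_mulVec, Pi.zero_apply]
    exact Finset.sum_eq_zero fun k _ => by rw [h i k, sub_self, mul_zero]

lemma dl_eigen_n (hG : G.Connected) (hn2 : 2 ≤ Fintype.card V) (x : V → ℝ) :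
    distLaplacian G *ᵥ x = (Fintype.card V : ℝ) • x ↔
      ((∀ i j : V, Gᶜ.Reachable i j → x i = x j) ∧ ∑ i, x i = 0) := by
  have hcard : (0:ℝ) < (Fintype.card V : ℝ) := by
    have : 0 < Fintype.card V := by omega
    exact_mod_cast this
  constructor
  · intro h
    have hsum : ∑ i, x i = 0 := by
      have h0 := dl_sum G x
      rw [h] at h0
      simp only [Pi.smul_apply, smul_eq_mul, ← Finset.mul_sum] at h0
      exact (mul_eq_zero.mp h0).resolve_left (ne_of_gt hcard)
    have hquad : x ⬝ᵥ (distLaplacian G *ᵥ x) = (Fintype.card V : ℝ) * ∑ i, x i^2 := by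
      rw [h]
      simp only [dotProduct, Pi.smul_apply, smul_eq_mul, Finset.mul_sum]
      exact Finset.sum_congr rfl fun i _ => by ring
    rw [dl_dot_split, hsum] at hquad
    have hnn : ∀ i k : V, 0 ≤ ((G.dist i k : ℝ) - if i = k then 0 else 1) * (x i - x k)^2 :=
      fun i k => mul_nonneg (dl_e_nonneg hG i k) (sq_nonneg _)
    have hQ : ∑ i : V, ∑ k : V, ((G.dist i k : ℝ) - if i = k then 0 else 1) * (x i - x k)^2
        = 0 := by
      nlinarith [hquad]
    have hadj : ∀ i j : V, Gᶜ.Adj i j → x i = x j := by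
      intro i j hij
      have h0 : ((G.dist i j : ℝ) - if i = j then 0 else 1) * (x i - x j)^2 = 0 := by
        have houter := (Finset.sum_eq_zero_iff_of_nonneg
          (fun a _ => Finset.sum_nonneg fun k _ => hnn a k)).mp hQ i (Finset.mem_univ i)
        exact (Finset.sum_eq_zero_iff_of_nonneg (fun k _ => hnn i k)).mp houter j (Finset.mem_univ j)
      rw [if_neg hij.ne] at h0
      have h2 := dl_dist_two_le hG hij
      have := (mul_eq_zero.mp h0).resolve_left (by linarith)
      exact sub_eq_zero.mp (sq_eq_zero_iff.mp this)
    refine ⟨?_, hsum⟩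
    intro i j hij
    obtain ⟨w⟩ := hij
    induction w with
    | nil => rfl
    | cons ha _ ih => exact (hadj _ _ ha).trans ih
  · rintro ⟨hc, hs⟩
    funext i
    rw [dl_mulVec]
    have e : ∀ k : V, (G.dist i k : ℝ) * (x i - x k)
        = (if i = k then (0:ℝ) else 1) * (x i - x k)
          + ((G.dist i k : ℝ) - if i = k then 0 else 1) * (x i - x k) := fun k => by ring
    rw [Finset.sum_congr rfl fun k _ => e k, Finset.sum_add_distrib]
    have hA : ∑ k, (if i = k then (0:ℝ) else 1) * (x i - x k) = (Fintype.card V) * x i := by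
      have e2 : ∀ k : V, (if i = k then (0:ℝ) else 1) * (x i - x k) = x i - x k := by
        intro k; by_cases h' : i = k
        · subst h'; simp
        · rw [if_neg h', one_mul]
      rw [Finset.sum_congr rfl fun k _ => e2 k, Finset.sum_sub_distrib, hs, Finset.sum_const,
        Finset.card_univ, nsmul_eq_mul, sub_zero]
    have hB : ∑ k, ((G.dist i k : ℝ) - if i = k then 0 else 1) * (x i - x k) = 0 := by
      apply Finset.sum_eq_zero; intro k _
      by_cases h' : i = k
      · subst h'; simp
      · by_cases hadj : G.Adj i k
        · rw [if_neg h', SimpleGraph.dist_eq_one_iff_adj.mpr hadj]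
          norm_num
        · have hcadj : Gᶜ.Adj i k := (SimpleGraph.compl_adj G i k).mpr ⟨h', hadj⟩
          rw [hc i k hcadj.reachable, sub_self, mul_zero]
    rw [hA, hB, add_zero, Pi.smul_apply, smul_eq_mul]

lemma dl_conn_card (hV : Nonempty V) : Gᶜ.Connected ↔ Nat.card Gᶜ.ConnectedComponent = 1 := by
  classical
  constructor
  · intro h
    rw [Nat.card_eq_one_iff_unique]
    exact ⟨h.preconnected.subsingleton_connectedComponent,
      ⟨Gᶜ.connectedComponentMk hV.some⟩⟩
  · intro h
    have hs : Subsingleton Gᶜ.ConnectedComponent := (Nat.card_eq_one_iff_unique.mp h).1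
    rw [SimpleGraph.connected_iff]
    refine ⟨fun u v => ?_, hV⟩
    have : Gᶜ.connectedComponentMk u = Gᶜ.connectedComponentMk v := Subsingleton.elim _ _
    exact (SimpleGraph.ConnectedComponent.eq).mp this

lemma dl_finrank_eigen_n (hG : G.Connected) (hn2 : 2 ≤ Fintype.card V) :
    Module.finrank ℝ (Module.End.eigenspace (distLaplacian G).mulVecLin (Fintype.card V : ℝ))
      = Nat.card Gᶜ.ConnectedComponent - 1 := by
  classical
  let σ : (V → ℝ) →ₗ[ℝ] ℝ := ∑ i : V, LinearMap.proj i
  have hσ : ∀ x : V → ℝ, σ x = ∑ i, x i := by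
    intro x; simp [σ, LinearMap.sum_apply, LinearMap.proj_apply]
  let K : Submodule ℝ (V → ℝ) := LinearMap.ker (Matrix.toLin' (Gᶜ.lapMatrix ℝ))
  have hKmem : ∀ x : V → ℝ, x ∈ K ↔ ∀ i j : V, Gᶜ.Reachable i j → x i = x j := by
    intro x
    rw [LinearMap.mem_ker]
    constructor
    · intro h
      rw [Matrix.toLin'_apply] at h
      exact (SimpleGraph.lapMatrix_mulVec_eq_zero_iff_forall_reachable (G := Gᶜ)).mp h
    · intro h
      rw [Matrix.toLin'_apply]
      exact (SimpleGraph.lapMatrix_mulVec_eq_zero_iff_forall_reachable (G := Gᶜ)).mpr h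
  have hE : Module.End.eigenspace (distLaplacian G).mulVecLin (Fintype.card V : ℝ)
      = K ⊓ LinearMap.ker σ := by
    ext x
    rw [Module.End.mem_eigenspace_iff, Submodule.mem_inf, hKmem, LinearMap.mem_ker, hσ]
    rw [Matrix.mulVecLin_apply]
    exact dl_eigen_n hG hn2 x
  have hone : (fun _ => (1:ℝ)) ∈ K := (hKmem _).mpr (fun i j _ => rfl)
  let σ' : K →ₗ[ℝ] ℝ := σ.comp K.subtype
  have hrange : Module.finrank ℝ (LinearMap.range σ') = 1 := by
    have hle : Module.finrank ℝ (LinearMap.range σ') ≤ 1 := by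
      have := Submodule.finrank_le (LinearMap.range σ')
      simpa using this
    have hne : LinearMap.range σ' ≠ ⊥ := by
      intro hbot
      have h1 : σ' ⟨(fun _ => (1:ℝ)), hone⟩ = Fintype.card V := by
        simp [σ', hσ]
      have : σ' ⟨(fun _ => (1:ℝ)), hone⟩ ∈ LinearMap.range σ' := LinearMap.mem_range_self _ _
      rw [hbot, Submodule.mem_bot] at this
      rw [h1] at this
      have hc0 : (Fintype.card V : ℝ) ≠ 0 := Nat.cast_ne_zero.mpr (by omega)
      exact hc0 this
    have hpos : 0 < Module.finrank ℝ (LinearMap.range σ') := by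
      rcases Nat.eq_zero_or_pos (Module.finrank ℝ (LinearMap.range σ')) with h | h
      · exact absurd (Submodule.finrank_eq_zero.mp h) hne
      · exact h
    omega
  have hrn := LinearMap.finrank_range_add_finrank_ker σ'
  have hKrank : Module.finrank ℝ K = Nat.card Gᶜ.ConnectedComponent := by
    rw [Nat.card_eq_fintype_card]
    exact (SimpleGraph.card_connectedComponent_eq_finrank_ker_toLin'_lapMatrix (G := Gᶜ)).symm
  have hkermap : (LinearMap.ker σ').map K.subtype = K ⊓ LinearMap.ker σ := by
    ext x
    simp only [Submodule.mem_map, LinearMap.mem_ker, Submodule.mem_inf]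
    constructor
    · rintro ⟨⟨y, hy⟩, hy0, rfl⟩
      exact ⟨hy, by simpa [σ'] using hy0⟩
    · rintro ⟨hx, hx0⟩
      exact ⟨⟨x, hx⟩, by simpa [σ'] using hx0, rfl⟩
  have hEq : Module.finrank ℝ (Module.End.eigenspace (distLaplacian G).mulVecLin
      (Fintype.card V : ℝ)) = Module.finrank ℝ (LinearMap.ker σ') := by
    rw [hE, ← hkermap]
    exact (Submodule.equivMapOfInjective K.subtype (Submodule.injective_subtype K)
      (LinearMap.ker σ')).symm.finrank_eq
  rw [hEq, ← hKrank]
  omega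

lemma dl_finrank_eigen_zero (hG : G.Connected) (hV : Nonempty V) :
    Module.finrank ℝ (Module.End.eigenspace (distLaplacian G).mulVecLin (0:ℝ)) = 1 := by
  classical
  have hspan : Module.End.eigenspace (distLaplacian G).mulVecLin (0:ℝ)
      = Submodule.span ℝ {(fun _ => (1:ℝ) : V → ℝ)} := by
    rw [Module.End.eigenspace_zero]
    ext x
    rw [LinearMap.mem_ker, Matrix.mulVecLin_apply, dl_ker hG, Submodule.mem_span_singleton]
    constructor
    · intro h
      refine ⟨x hV.some, ?_⟩
      funext j
      rw [Pi.smul_apply, smul_eq_mul, mul_one]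
      exact h hV.some j
    · rintro ⟨c, rfl⟩ i j
      simp
  rw [hspan, finrank_span_singleton]
  intro h0
  exact one_ne_zero (congrFun h0 hV.some)

lemma dl_eigenvalue_alt (hG : G.Connected) (hn2 : 2 ≤ Fintype.card V) (i : V) :
    (dl_herm G).eigenvalues i = 0 ∨ (Fintype.card V : ℝ) ≤ (dl_herm G).eigenvalues i := by
  classical
  set hA := dl_herm G
  set ev := hA.eigenvalues with hev_def
  let b : Module.Basis V ℝ (V → ℝ) :=
    (hA.eigenvectorBasis.toBasis).map (WithLp.linearEquiv 2 ℝ (V → ℝ))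
  have hb : ∀ j, b j = ⇑(hA.eigenvectorBasis j) := by
    intro j
    simp [b, Module.Basis.map_apply]
  set x : V → ℝ := b i with hxdef
  have hev : distLaplacian G *ᵥ x = ev i • x := by
    rw [hxdef, hb]; exact hA.mulVec_eigenvectorBasis i
  have hxne : x ≠ 0 := b.ne_zero i
  obtain ⟨j, hj⟩ := Function.ne_iff.mp hxne
  have hS2 : 0 < ∑ k, x k^2 :=
    Finset.sum_pos' (fun k _ => sq_nonneg _)
      ⟨j, Finset.mem_univ j,
        lt_of_le_of_ne (sq_nonneg _) (Ne.symm (pow_ne_zero 2 (by simpa using hj)))⟩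
  by_cases h0 : ev i = 0
  · exact Or.inl h0
  right
  have hsum0 : ev i * ∑ k, x k = 0 := by
    have h := dl_sum G x
    rw [hev] at h
    simpa only [Pi.smul_apply, smul_eq_mul, ← Finset.mul_sum] using h
  have hS1 : ∑ k, x k = 0 := (mul_eq_zero.mp hsum0).resolve_left h0
  have hq : x ⬝ᵥ (distLaplacian G *ᵥ x) = ev i * ∑ k, x k^2 := by
    rw [hev]
    simp only [dotProduct, Pi.smul_apply, smul_eq_mul, Finset.mul_sum]
    exact Finset.sum_congr rfl fun k _ => by ring
  rw [dl_dot_split, hS1] at hq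
  norm_num at hq
  have hQnn : 0 ≤ ∑ a : V, ∑ k : V, ((G.dist a k : ℝ) - if a = k then 0 else 1) * (x a - x k)^2 :=
    Finset.sum_nonneg fun a _ =>
      Finset.sum_nonneg fun k _ => mul_nonneg (dl_e_nonneg hG a k) (sq_nonneg _)
  have key : (Fintype.card V : ℝ) * (∑ k, x k^2) ≤ ev i * (∑ k, x k^2) := by linarith
  exact le_of_mul_le_mul_right key hS2

end GraphAux

/-- For a connected graph `G` on `n ≥ 2` vertices, the second smallest
distance Laplacian eigenvalue `∂ᴸ_{n-1}` satisfies `∂ᴸ_{n-1} ≥ n`, with equality iff the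
complement of `G` is disconnected; moreover the multiplicity of `n` as a distance Laplacian
eigenvalue equals the number of connected components of the complement minus one. -/
theorem second_smallest_distLaplacian_eigenvalue
    (n : ℕ) (hn : 2 ≤ n) (G : SimpleGraph (Fin n)) (hG : G.Connected) :
    (n : ℝ) ≤ (distLapEigsAsc G).getD 1 0 ∧
      ((distLapEigsAsc G).getD 1 0 = (n : ℝ) ↔ ¬ Gᶜ.Connected) ∧
      eigMult (distLaplacian G) (n : ℝ) = Nat.card Gᶜ.ConnectedComponent - 1 := by
  classical
  have hcardV : Fintype.card (Fin n) = n := Fintype.card_fin n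
  have hn2 : 2 ≤ Fintype.card (Fin n) := by rw [hcardV]; exact hn
  have hA : (distLaplacian G).IsHermitian := dl_herm G
  have hVne : Nonempty (Fin n) := ⟨⟨0, by omega⟩⟩
  set c := Nat.card Gᶜ.ConnectedComponent with hc
  have hcomp_ne : Nonempty Gᶜ.ConnectedComponent := ⟨Gᶜ.connectedComponentMk hVne.some⟩
  have hc1 : 1 ≤ c := Nat.card_pos
  have hnR : (2:ℝ) ≤ (n:ℝ) := by exact_mod_cast hn
  -- finrank facts
  have hfrn : Module.finrank ℝ (Module.End.eigenspace (distLaplacian G).mulVecLin (n:ℝ))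
      = c - 1 := by
    have := dl_finrank_eigen_n hG hn2
    rwa [hcardV] at this
  have hmult : eigMult (distLaplacian G) (n:ℝ) = c - 1 := hfrn
  -- counting
  have hcount0 : (distLaplacian G).charpoly.roots.count 0 = 1 := by
    rw [aux_count hA 0]
    exact dl_finrank_eigen_zero hG hVne
  have hcountn : (distLaplacian G).charpoly.roots.count (n:ℝ) = c - 1 := by
    rw [aux_count hA (n:ℝ)]
    exact hfrn
  have hroots : (distLaplacian G).charpoly.roots = Multiset.map hA.eigenvalues Finset.univ.val :=
    aux_roots_herm hA
  have halt : ∀ y ∈ (distLaplacian G).charpoly.roots, y = 0 ∨ (n:ℝ) ≤ y := by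
    intro y hy
    rw [hroots, Multiset.mem_map] at hy
    obtain ⟨i, -, rfl⟩ := hy
    have := dl_eigenvalue_alt hG hn2 i
    rwa [hcardV] at this
  -- the sorted list
  set l := distLapEigsAsc G with hldef
  have hlrt : l = (distLaplacian G).charpoly.roots.sort (· ≤ ·) := rfl
  have hlen : l.length = n := by
    rw [hlrt, Multiset.length_sort, hroots, Multiset.card_map]
    rw [show Multiset.card Finset.univ.val = Fintype.card (Fin n) from Finset.card_univ, hcardV]
  have hsorted : l.Pairwise (· ≤ ·) := by rw [hlrt]; exact Multiset.pairwise_sort _ _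
  have hlmem : ∀ y ∈ l, y = 0 ∨ (n:ℝ) ≤ y := by
    intro y hy
    rw [hlrt] at hy
    exact halt y ((Multiset.mem_sort _).mp hy)
  have hlmem' : ∀ y : ℝ, y ∈ l ↔ y ∈ (distLaplacian G).charpoly.roots := by
    intro y; rw [hlrt]; exact Multiset.mem_sort _
  have hlcount : ∀ y : ℝ, l.count y = (distLaplacian G).charpoly.roots.count y := by
    intro y
    conv_rhs => rw [← Multiset.sort_eq (distLaplacian G).charpoly.roots (· ≤ ·)]
    rw [Multiset.coe_count, hlrt]
  clear_value l
  obtain ⟨a, b, t, hlbt⟩ : ∃ a b t, l = a :: b :: t := by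
    match l, hlen with
    | x :: y :: t, _ => exact ⟨x, y, t, rfl⟩
    | [], h => simp at h; omega
    | [x], h => simp at h; omega
  have hgetD : l.getD 1 0 = b := by rw [hlbt]; rfl
  have hsc : ∀ y ∈ b :: t, a ≤ y := by
    rw [hlbt] at hsorted
    exact (List.pairwise_cons.mp hsorted).1
  have hsc2 : ∀ y ∈ t, b ≤ y := by
    rw [hlbt] at hsorted
    exact (List.pairwise_cons.mp (List.pairwise_cons.mp hsorted).2).1
  have h0inl : (0:ℝ) ∈ l := by
    rw [hlmem', ← Multiset.count_pos, hcount0]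
    omega
  have ha0 : a = 0 := by
    have hha := hlmem a (by rw [hlbt]; exact List.mem_cons_self)
    have hale : a ≤ 0 := by
      rw [hlbt] at h0inl
      rcases List.mem_cons.mp h0inl with h | h
      · exact le_of_eq h.symm
      · exact hsc 0 h
    rcases hha with h | h
    · exact h
    · linarith
  have hbn : (n:ℝ) ≤ b := by
    rcases hlmem b (by rw [hlbt]; exact List.mem_cons_of_mem _ (List.mem_cons_self)) with h | h
    · exfalso
      have hcl : l.count (0:ℝ) = 1 := by rw [hlcount, hcount0]
      rw [hlbt, ha0, h] at hcl
      simp [List.count_cons] at hcl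
    · exact h
  have hconn : Gᶜ.Connected ↔ c = 1 := dl_conn_card hVne
  have hnroot_iff : ((n:ℝ) ∈ l ↔ c - 1 ≠ 0) := by
    rw [hlmem', ← Multiset.count_pos, hcountn]
    omega
  refine ⟨?_, ?_, ?_⟩
  · rw [hgetD]; exact hbn
  · rw [hgetD]
    constructor
    · intro hbeq
      have hmem : (n:ℝ) ∈ l := by
        rw [hlbt, ← hbeq]
        exact List.mem_cons_of_mem _ (List.mem_cons_self)
      have hcn : c - 1 ≠ 0 := hnroot_iff.mp hmem
      intro hcon
      rw [hconn] at hcon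
      omega
    · intro hncon
      have hc2 : c ≠ 1 := fun h => hncon (hconn.mpr h)
      have hmem : (n:ℝ) ∈ l := hnroot_iff.mpr (by omega)
      rw [hlbt] at hmem
      rcases List.mem_cons.mp hmem with h1 | hmem'
      · exfalso; rw [ha0] at h1; linarith
      rcases List.mem_cons.mp hmem' with h2 | h3
      · exact h2.symm
      · have : b ≤ (n:ℝ) := hsc2 _ h3
        linarith
  · exact hmult
end

section
/- Let G be a connected simple graph on n vertices and at least n edges, let e be an edge of G such that the graph G' obtained from G by deleting e is still connected, and let ∂L_1 ≥ ⋯ ≥ ∂L_n and ∂'L_1 ≥ ⋯ ≥ ∂'L_n denote the distance Laplacian eigenvalues of G and G' respectively, each listed in nonincreasing order with multiplicity. Then ∂'L_i ≥ ∂L_i for all i = 1,…,n. -/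
open Matrix

/-- The distance Laplacian eigenvalues of `G`, with multiplicity, sorted in
nonincreasing order (so `∂ᴸ₁` comes first). -/
noncomputable def distLapEigsDesc {V : Type*} [Fintype V] [DecidableEq V]
    (G : SimpleGraph V) : List ℝ :=
  ((distLaplacian G).charpoly.roots.sort (· ≤ ·)).reverse

/-! ### Auxiliary lemmas -/

section Aux

open Polynomial Finset Module
open scoped RealInnerProductSpace

/-- The characteristic matrix of a diagonal matrix. -/
lemma aux_charmatrix_diagonal {n : ℕ} (d : Fin n → ℝ) :
    charmatrix (diagonal d) = diagonal (fun i => (X : ℝ[X]) - C (d i)) := by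
  ext i j
  by_cases h : i = j
  · subst h; simp [charmatrix_apply_eq]
  · simp [charmatrix_apply, diagonal_apply_ne _ h, diagonal_apply_ne' _ (Ne.symm h), h]

/-- The characteristic polynomial of a real symmetric matrix factors through its
eigenvalues. -/
lemma aux_herm_charpoly {n : ℕ} (M : Matrix (Fin n) (Fin n) ℝ) (hM : M.IsHermitian) :
    M.charpoly = ∏ i, ((X : ℝ[X]) - C (hM.eigenvalues i)) := by
  classical
  set U : Matrix (Fin n) (Fin n) ℝ := (hM.eigenvectorUnitary : Matrix (Fin n) (Fin n) ℝ) with hU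
  have h1 : U * star U = 1 := (Matrix.mem_unitaryGroup_iff).mp hM.eigenvectorUnitary.2
  have h2 : star U * U = 1 := (Matrix.mem_unitaryGroup_iff').mp hM.eigenvectorUnitary.2
  have hD : (diagonal (RCLike.ofReal ∘ hM.eigenvalues) : Matrix (Fin n) (Fin n) ℝ)
      = diagonal hM.eigenvalues := by congr 1
  have hs : M = U * diagonal hM.eigenvalues * star U := by
    rw [← hD]; exact hM.spectral_theorem
  have hcomm : ∀ A : Matrix (Fin n) (Fin n) ℝ[X],
      (Matrix.scalar (Fin n) (X : ℝ[X])) * A = A * (Matrix.scalar (Fin n) (X : ℝ[X])) :=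
    fun A => scalar_commute (X : ℝ[X]) (fun r' => Commute.all _ _) A
  have key : charmatrix M =
      (C : ℝ →+* ℝ[X]).mapMatrix U * charmatrix (diagonal hM.eigenvalues)
        * (C : ℝ →+* ℝ[X]).mapMatrix (star U) := by
    have this1 : (Matrix.scalar (Fin n) (X : ℝ[X])) =
        (C : ℝ →+* ℝ[X]).mapMatrix U * (Matrix.scalar (Fin n) (X : ℝ[X]))
          * (C : ℝ →+* ℝ[X]).mapMatrix (star U) := by
      rw [← hcomm, mul_assoc, ← RingHom.map_mul, h1]
      simp
    have this2 : (C : ℝ →+* ℝ[X]).mapMatrix M =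
        (C : ℝ →+* ℝ[X]).mapMatrix U * (C : ℝ →+* ℝ[X]).mapMatrix (diagonal hM.eigenvalues)
          * (C : ℝ →+* ℝ[X]).mapMatrix (star U) := by
      rw [← RingHom.map_mul, ← RingHom.map_mul]
      exact congrArg _ hs
    rw [charmatrix, charmatrix, mul_sub, sub_mul, ← this1, this2]
  have hdet : M.charpoly
      = ((C : ℝ →+* ℝ[X]).mapMatrix (star U) * (C : ℝ →+* ℝ[X]).mapMatrix U).det
        * (charmatrix (diagonal hM.eigenvalues)).det := by
    rw [Matrix.charpoly, key, det_mul, det_mul, det_mul]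
    ring
  rw [hdet, ← RingHom.map_mul, h2, RingHom.map_one, det_one, one_mul,
    aux_charmatrix_diagonal, det_diagonal]

/-- The roots of the characteristic polynomial of a real symmetric matrix are exactly its
eigenvalues (with multiplicity). -/
lemma aux_herm_charpoly_roots {n : ℕ} (M : Matrix (Fin n) (Fin n) ℝ) (hM : M.IsHermitian) :
    M.charpoly.roots = Finset.univ.val.map hM.eigenvalues := by
  rw [aux_herm_charpoly M hM, Finset.prod_eq_multiset_prod]
  have : (Multiset.map (fun i => (X : ℝ[X]) - C (hM.eigenvalues i)) Finset.univ.val)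
      = Multiset.map (fun a => (X : ℝ[X]) - C a)
          (Multiset.map hM.eigenvalues Finset.univ.val) := by
    rw [Multiset.map_map]; rfl
  rw [this, roots_multiset_prod_X_sub_C]

lemma aux_onb_sum_mul {n : ℕ} (b : OrthonormalBasis (Fin n) ℝ (EuclideanSpace ℝ (Fin n)))
    (j k : Fin n) : ∑ i, b j i * b k i = if j = k then 1 else 0 := by
  have h := orthonormal_iff_ite.mp b.orthonormal j k
  simp [PiLp.inner_apply, RCLike.inner_apply, starRingEnd_apply, star_trivial] at h
  rw [← h]
  exact Finset.sum_congr rfl fun i _ => mul_comm _ _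

lemma aux_onb_combo_dot {n : ℕ} (b : OrthonormalBasis (Fin n) ℝ (EuclideanSpace ℝ (Fin n)))
    (u v : Fin n → ℝ) :
    ∑ i, (∑ j, u j * b j i) * (∑ k, v k * b k i) = ∑ j, u j * v j := by
  have : ∀ i : Fin n, (∑ j, u j * b j i) * (∑ k, v k * b k i)
      = ∑ j, ∑ k, (u j * v k) * (b j i * b k i) := by
    intro i
    rw [Finset.sum_mul_sum]
    exact Finset.sum_congr rfl fun j _ => Finset.sum_congr rfl fun k _ => by ring
  rw [Finset.sum_congr rfl fun i _ => this i]
  rw [Finset.sum_comm]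
  have : ∀ j : Fin n, ∑ i, ∑ k, (u j * v k) * (b j i * b k i) = u j * v j := by
    intro j
    rw [Finset.sum_comm]
    have h1 : ∀ k : Fin n, ∑ i, (u j * v k) * (b j i * b k i)
        = (u j * v k) * (if j = k then (1:ℝ) else 0) := by
      intro k
      rw [← Finset.mul_sum, aux_onb_sum_mul]
    rw [Finset.sum_congr rfl fun k _ => h1 k]
    simp
  rw [Finset.sum_congr rfl fun j _ => this j]

/-- Lower bound on the Rayleigh quotient of a vector lying in the span of eigenvectors whose
eigenvalues are all at least `t`. -/
lemma aux_rayleigh_span_ge {n : ℕ} (M : Matrix (Fin n) (Fin n) ℝ)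
    (b : OrthonormalBasis (Fin n) ℝ (EuclideanSpace ℝ (Fin n))) (μ : Fin n → ℝ)
    (hMb : ∀ j, M *ᵥ ⇑(b j) = μ j • ⇑(b j)) (s : Finset (Fin n)) (t : ℝ)
    (hts : ∀ j ∈ s, t ≤ μ j) (x : EuclideanSpace ℝ (Fin n))
    (hx : x ∈ Submodule.span ℝ (⇑b '' ↑s)) :
    t * (∑ i, x i * x i) ≤ ∑ i, x i * (M *ᵥ ⇑x) i := by
  classical
  set c : Fin n → ℝ := fun j => ⟪b j, x⟫ with hc
  have hc0 : ∀ j ∉ s, c j = 0 := by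
    intro j hj
    show (⟪b j, x⟫ : ℝ) = 0
    refine Submodule.span_induction (p := fun y _ => (⟪b j, y⟫ : ℝ) = 0) ?_ ?_ ?_ ?_ hx
    · rintro y ⟨i, hi, rfl⟩
      have := orthonormal_iff_ite.mp b.orthonormal j i
      rw [this]
      simp only [Finset.mem_coe] at hi
      have : j ≠ i := fun h => hj (h ▸ hi)
      simp [this]
    · simp
    · intro y z _ _ hy hz; rw [inner_add_right, hy, hz, add_zero]
    · intro a y _ hy; rw [inner_smul_right, hy, mul_zero]
  have hxi : ∀ i, x i = ∑ j, c j * b j i := by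
    intro i
    conv_lhs => rw [← b.sum_repr' x]
    rw [show ((∑ j, ⟪b j, x⟫ • b j : EuclideanSpace ℝ (Fin n)) i)
        = ∑ j, (⟪b j, x⟫ • b j : EuclideanSpace ℝ (Fin n)) i by rw [WithLp.ofLp_sum, Finset.sum_apply]]
    rfl
  have hMxi : ∀ i, (M *ᵥ ⇑x) i = ∑ j, (c j * μ j) * b j i := by
    intro i
    have h1 : (M *ᵥ ⇑x) i = ∑ l, M i l * x l := rfl
    rw [h1]
    have h2 : ∀ l, M i l * x l = ∑ j, c j * (M i l * b j l) := by
      intro l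
      rw [hxi l, Finset.mul_sum]
      exact Finset.sum_congr rfl fun j _ => by ring
    rw [Finset.sum_congr rfl fun l _ => h2 l, Finset.sum_comm]
    refine Finset.sum_congr rfl fun j _ => ?_
    rw [← Finset.mul_sum]
    have h3 : (∑ l, M i l * b j l) = (M *ᵥ ⇑(b j)) i := rfl
    rw [h3, hMb j]
    show c j * (μ j * b j i) = c j * μ j * b j i
    ring
  have e1 : ∑ i, x i * x i = ∑ j, c j * c j := by
    calc ∑ i, x i * x i = ∑ i, (∑ j, c j * b j i) * (∑ k, c k * b k i) := by
          refine Finset.sum_congr rfl fun i _ => by rw [← hxi]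
      _ = ∑ j, c j * c j := aux_onb_combo_dot b c c
  have e2 : ∑ i, x i * (M *ᵥ ⇑x) i = ∑ j, c j * (c j * μ j) := by
    calc ∑ i, x i * (M *ᵥ ⇑x) i
        = ∑ i, (∑ j, c j * b j i) * (∑ k, (c k * μ k) * b k i) := by
          refine Finset.sum_congr rfl fun i _ => by rw [← hxi, ← hMxi]
      _ = ∑ j, c j * (c j * μ j) := aux_onb_combo_dot b c _
  rw [e1, e2, Finset.mul_sum]
  refine Finset.sum_le_sum fun j _ => ?_
  by_cases hj : j ∈ s
  · have := hts j hj
    nlinarith [sq_nonneg (c j)]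
  · rw [hc0 j hj]; ring_nf; exact le_refl 0

/-- The quadratic form of a (generalized) Laplacian matrix. -/
lemma aux_lap_quad {n : ℕ} (δ : Fin n → Fin n → ℝ) (hsym : ∀ i j, δ i j = δ j i)
    (hdiag : ∀ i, δ i i = 0) (x : Fin n → ℝ) :
    2 * (∑ i, x i * ((Matrix.of fun i j =>
        if i = j then ∑ k, δ i k else -(δ i j)) *ᵥ x) i)
      = ∑ i, ∑ j, δ i j * (x i - x j)^2 := by
  classical
  have hrow : ∀ i, ((Matrix.of fun i j =>
      if i = j then ∑ k, δ i k else -(δ i j)) *ᵥ x) i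
      = (∑ k, δ i k) * x i - ∑ j, δ i j * x j := by
    intro i
    show (∑ j, (if i = j then ∑ k, δ i k else -(δ i j)) * x j) = _
    have : ∀ j, (if i = j then ∑ k, δ i k else -(δ i j)) * x j
        = (if i = j then ((∑ k, δ i k) + δ i j) * x j else 0) - δ i j * x j := by
      intro j
      by_cases h : i = j
      · subst h; simp [hdiag i]
      · simp [h]
    rw [Finset.sum_congr rfl fun j _ => this j, Finset.sum_sub_distrib,
      Finset.sum_ite_eq Finset.univ i (fun j => ((∑ k, δ i k) + δ i j) * x j)]
    simp [hdiag i]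
  have lhs_eq : 2 * (∑ i, x i * ((Matrix.of fun i j =>
      if i = j then ∑ k, δ i k else -(δ i j)) *ᵥ x) i)
      = ∑ i, ∑ j, (2 * (δ i j * (x i)^2) - 2 * (δ i j * (x i * x j))) := by
    rw [Finset.mul_sum]
    refine Finset.sum_congr rfl fun i _ => ?_
    rw [hrow i]
    rw [Finset.sum_sub_distrib]
    rw [show (∑ j, 2 * (δ i j * (x i)^2)) = 2 * ((∑ k, δ i k) * x i * x i) by
      rw [Finset.sum_mul, Finset.sum_mul, Finset.mul_sum]
      exact Finset.sum_congr rfl fun j _ => by ring]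
    rw [show (∑ j, 2 * (δ i j * (x i * x j))) = 2 * (x i * ∑ j, δ i j * x j) by
      rw [Finset.mul_sum, Finset.mul_sum]
      exact Finset.sum_congr rfl fun j _ => by ring]
    ring
  rw [lhs_eq]
  have swap : ∑ i, ∑ j, δ i j * (x j)^2 = ∑ i, ∑ j, δ i j * (x i)^2 := by
    rw [Finset.sum_comm]
    exact Finset.sum_congr rfl fun i _ => Finset.sum_congr rfl fun j _ => by rw [hsym]
  have expand : ∑ i, ∑ j, δ i j * (x i - x j)^2
      = (∑ i, ∑ j, δ i j * (x i)^2) + (∑ i, ∑ j, δ i j * (x j)^2)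
        - 2 * ∑ i, ∑ j, δ i j * (x i * x j) := by
    rw [Finset.mul_sum, ← Finset.sum_add_distrib, ← Finset.sum_sub_distrib]
    refine Finset.sum_congr rfl fun i _ => ?_
    rw [Finset.mul_sum, ← Finset.sum_add_distrib, ← Finset.sum_sub_distrib]
    exact Finset.sum_congr rfl fun j _ => by ring
  rw [expand, swap]
  have A : ∑ i, ∑ j, (2 * (δ i j * (x i)^2) - 2 * (δ i j * (x i * x j)))
      = 2 * (∑ i, ∑ j, δ i j * (x i)^2) - 2 * (∑ i, ∑ j, δ i j * (x i * x j)) := by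
    simp only [Finset.sum_sub_distrib, Finset.mul_sum]
  rw [A]
  ring

/-- Deleting edges (while keeping connectivity) cannot decrease distances. -/
lemma aux_dist_mono {n : ℕ} {G G' : SimpleGraph (Fin n)} (h : G' ≤ G) (hG' : G'.Connected)
    (u v : Fin n) : G.dist u v ≤ G'.dist u v := by
  obtain ⟨p, hp⟩ := (hG'.preconnected u v).exists_walk_length_eq_dist
  calc G.dist u v ≤ (p.mapLe h).length := SimpleGraph.dist_le _
    _ = G'.dist u v := by simp [SimpleGraph.Walk.mapLe, hp]

lemma aux_distLap_quad {n : ℕ} (G : SimpleGraph (Fin n)) (x : Fin n → ℝ) :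
    2 * (∑ i, x i * (distLaplacian G *ᵥ x) i)
      = ∑ i, ∑ j, (G.dist i j : ℝ) * (x i - x j)^2 := by
  exact aux_lap_quad (fun i j => (G.dist i j : ℝ))
    (fun i j => by show (G.dist i j : ℝ) = G.dist j i; rw [SimpleGraph.dist_comm])
    (fun i => by simp) x

/-- Monotonicity of the distance Laplacian quadratic form under edge deletion. -/
lemma aux_distLap_quad_mono {n : ℕ} {G G' : SimpleGraph (Fin n)} (h : G' ≤ G)
    (hG' : G'.Connected) (x : Fin n → ℝ) :
    ∑ i, x i * (distLaplacian G *ᵥ x) i ≤ ∑ i, x i * (distLaplacian G' *ᵥ x) i := by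
  have h2 : 2 * (∑ i, x i * (distLaplacian G *ᵥ x) i)
      ≤ 2 * (∑ i, x i * (distLaplacian G' *ᵥ x) i) := by
    rw [aux_distLap_quad, aux_distLap_quad]
    refine Finset.sum_le_sum fun i _ => Finset.sum_le_sum fun j _ => ?_
    have hd : (G.dist i j : ℝ) ≤ (G'.dist i j : ℝ) := by
      exact_mod_cast aux_dist_mono h hG' i j
    nlinarith [sq_nonneg (x i - x j)]
  linarith

lemma aux_distLap_isHermitian {n : ℕ} (G : SimpleGraph (Fin n)) :
    (distLaplacian G).IsHermitian := by
  rw [Matrix.IsHermitian]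
  ext i j
  simp only [conjTranspose_apply, star_trivial, distLaplacian, Matrix.of_apply]
  by_cases h : i = j
  · subst h; simp
  · simp only [if_neg h, if_neg (Ne.symm h), neg_inj, Nat.cast_inj]
    exact SimpleGraph.dist_comm ..

lemma aux_exists_ne_zero_mem_inf {E : Type*} [NormedAddCommGroup E] [InnerProductSpace ℝ E]
    [FiniteDimensional ℝ E] (W Z : Submodule ℝ E)
    (h : finrank ℝ E < finrank ℝ W + finrank ℝ Z) :
    ∃ x : E, x ≠ 0 ∧ x ∈ W ∧ x ∈ Z := by
  have h1 := Submodule.finrank_sup_add_finrank_inf_eq W Z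
  have h2 : finrank ℝ ↥(W ⊔ Z) ≤ finrank ℝ E := Submodule.finrank_le _
  have h3 : 0 < finrank ℝ ↥(W ⊓ Z) := by omega
  obtain ⟨x, hx⟩ := finrank_pos_iff_exists_ne_zero.mp h3
  exact ⟨↑x, by simpa using hx, x.2.1, x.2.2⟩

lemma aux_finrank_span_onb {n : ℕ} (b : OrthonormalBasis (Fin n) ℝ (EuclideanSpace ℝ (Fin n)))
    (s : Finset (Fin n)) :
    finrank ℝ (Submodule.span ℝ (⇑b '' ↑s)) = s.card := by
  have hli : LinearIndependent ℝ (fun j : ↥s => b ↑j) :=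
    (b.orthonormal.comp (Subtype.val : ↥s → Fin n) Subtype.val_injective).linearIndependent
  have himg : Set.range (fun j : ↥s => b ↑j) = ⇑b '' ↑s := by
    ext y
    simp [Set.mem_image, Set.mem_range]
  rw [← himg, finrank_span_eq_card hli, Fintype.card_coe]

lemma aux_sorted_desc_mono {L : List ℝ} (hL : L.Pairwise (fun a b => b ≤ a))
    {i j : ℕ} (hi : i < L.length) (hj : j < L.length) (hij : i ≤ j) : L[j] ≤ L[i] := by
  rcases Nat.eq_or_lt_of_le hij with h | h
  · subst h; exact le_refl _
  · exact (List.pairwise_iff_getElem.mp hL) i j hi hj h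

lemma aux_sorted_desc_count_ge {L : List ℝ} (hL : L.Pairwise (fun a b => b ≤ a)) {k : ℕ}
    (hk : k < L.length) :
    k + 1 ≤ L.countP (fun a => decide (L.getD k 0 ≤ a)) := by
  set c := L.getD k 0 with hc
  have hck : c = L[k] := List.getD_eq_getElem L 0 hk
  have hsplit : L.countP (fun a => decide (c ≤ a)) =
      (L.take (k+1)).countP (fun a => decide (c ≤ a))
        + (L.drop (k+1)).countP (fun a => decide (c ≤ a)) := by
    conv_lhs => rw [← List.take_append_drop (k+1) L]
    rw [List.countP_append]
  have hlen : (L.take (k+1)).length = k + 1 := by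
    rw [List.length_take]; omega
  have htake : (L.take (k+1)).countP (fun a => decide (c ≤ a)) = (L.take (k+1)).length := by
    rw [List.countP_eq_length]
    intro a ha
    obtain ⟨i, hi, hia⟩ := List.mem_iff_getElem.mp ha
    rw [List.getElem_take] at hia
    have hik : i ≤ k := by rw [hlen] at hi; omega
    have hil : i < L.length := by omega
    subst hia
    simp only [decide_eq_true_eq]
    rw [hck]
    exact aux_sorted_desc_mono hL hil hk hik
  omega

lemma aux_sorted_desc_count_le {L : List ℝ} (hL : L.Pairwise (fun a b => b ≤ a)) {k : ℕ}
    (hk : k < L.length) :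
    L.length - k ≤ L.countP (fun a => decide (a ≤ L.getD k 0)) := by
  set c := L.getD k 0 with hc
  have hck : c = L[k] := List.getD_eq_getElem L 0 hk
  have hsplit : L.countP (fun a => decide (a ≤ c)) =
      (L.take k).countP (fun a => decide (a ≤ c))
        + (L.drop k).countP (fun a => decide (a ≤ c)) := by
    conv_lhs => rw [← List.take_append_drop k L]
    rw [List.countP_append]
  have hlen : (L.drop k).length = L.length - k := by rw [List.length_drop]
  have hdrop : (L.drop k).countP (fun a => decide (a ≤ c)) = (L.drop k).length := by
    rw [List.countP_eq_length]
    intro a ha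
    obtain ⟨i, hi, hia⟩ := List.mem_iff_getElem.mp ha
    rw [List.getElem_drop] at hia
    have hkl : k + i < L.length := by rw [hlen] at hi; omega
    subst hia
    simp only [decide_eq_true_eq]
    rw [hck]
    exact aux_sorted_desc_mono hL hk hkl (by omega)
  omega

/-- The nonincreasing list of eigenvalues of a real symmetric matrix. -/
noncomputable def auxEigsDesc {n : ℕ} (M : Matrix (Fin n) (Fin n) ℝ) : List ℝ :=
  (M.charpoly.roots.sort (· ≤ ·)).reverse

lemma aux_eigsDesc_length {n : ℕ} (M : Matrix (Fin n) (Fin n) ℝ) (hM : M.IsHermitian) :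
    (auxEigsDesc M).length = n := by
  rw [auxEigsDesc, List.length_reverse, Multiset.length_sort, aux_herm_charpoly_roots M hM,
    Multiset.card_map]
  simp

lemma aux_eigsDesc_sorted {n : ℕ} (M : Matrix (Fin n) (Fin n) ℝ) :
    (auxEigsDesc M).Pairwise (fun a b => b ≤ a) := by
  rw [auxEigsDesc, List.pairwise_reverse]
  exact Multiset.pairwise_sort _ (· ≤ ·)

lemma aux_eigsDesc_countP {n : ℕ} (M : Matrix (Fin n) (Fin n) ℝ) (hM : M.IsHermitian)
    (p : ℝ → Prop) [DecidablePred p] :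
    (auxEigsDesc M).countP (fun a => decide (p a))
      = (Finset.univ.filter (fun j => p (hM.eigenvalues j))).card := by
  rw [auxEigsDesc, List.countP_reverse]
  have h1 : (M.charpoly.roots.sort (· ≤ ·)).countP (fun a => decide (p a))
      = Multiset.countP p M.charpoly.roots := by
    rw [← Multiset.coe_countP, Multiset.sort_eq]
  rw [h1, aux_herm_charpoly_roots M hM, Multiset.countP_map]
  rfl

end Aux

/-- Let `G` be a connected graph on `n` vertices with at least `n` edges,
and let `G'` be obtained from `G` by deleting an edge `e`, with `G'` still connected. Then
`∂'ᴸ_i ≥ ∂ᴸ_i` for all `i = 1, …, n`, where the distance Laplacian eigenvalues of `G` and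
`G'` are listed in nonincreasing order with multiplicity. -/
theorem distLaplacian_eigenvalues_mono_of_deleteEdge
    (n : ℕ) (G : SimpleGraph (Fin n)) [DecidableRel G.Adj] (hG : G.Connected)
    (hm : n ≤ G.edgeFinset.card) (e : Sym2 (Fin n)) (he : e ∈ G.edgeSet)
    (G' : SimpleGraph (Fin n)) (hG'def : G' = G.deleteEdges {e}) (hG' : G'.Connected) :
    ∀ i : Fin n, (distLapEigsDesc G).getD i 0 ≤ (distLapEigsDesc G').getD i 0 := by
  intro i
  classical
  have hle : G' ≤ G := hG'def ▸ SimpleGraph.deleteEdges_le _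
  set A := distLaplacian G with hAdef
  set B := distLaplacian G' with hBdef
  have hA : A.IsHermitian := aux_distLap_isHermitian G
  have hB : B.IsHermitian := aux_distLap_isHermitian G'
  have hGA : distLapEigsDesc G = auxEigsDesc A := rfl
  have hGB : distLapEigsDesc G' = auxEigsDesc B := rfl
  rw [hGA, hGB]
  set k : ℕ := (i : ℕ) with hkdef
  have hk : k < n := i.2
  have lenA : (auxEigsDesc A).length = n := aux_eigsDesc_length A hA
  have lenB : (auxEigsDesc B).length = n := aux_eigsDesc_length B hB
  set c : ℝ := (auxEigsDesc A).getD k 0 with hcdef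
  set c' : ℝ := (auxEigsDesc B).getD k 0 with hc'def
  -- counting eigenvalues
  have hcountA : k + 1 ≤ (Finset.univ.filter (fun j => c ≤ hA.eigenvalues j)).card := by
    have h1 := aux_sorted_desc_count_ge (aux_eigsDesc_sorted A) (k := k) (by rw [lenA]; omega)
    have h2 : (auxEigsDesc A).countP (fun a => decide (c ≤ a))
        = (Finset.univ.filter (fun j => c ≤ hA.eigenvalues j)).card :=
      aux_eigsDesc_countP A hA (fun a => c ≤ a)
    rw [← h2]
    exact h1
  have hcountB : n - k ≤ (Finset.univ.filter (fun j => hB.eigenvalues j ≤ c')).card := by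
    have h1 := aux_sorted_desc_count_le (aux_eigsDesc_sorted B) (k := k) (by rw [lenB]; omega)
    rw [lenB] at h1
    have h2 : (auxEigsDesc B).countP (fun a => decide (a ≤ c'))
        = (Finset.univ.filter (fun j => hB.eigenvalues j ≤ c')).card :=
      aux_eigsDesc_countP B hB (fun a => a ≤ c')
    rw [← h2]
    exact h1
  set sA := Finset.univ.filter (fun j => c ≤ hA.eigenvalues j) with hsA
  set sB := Finset.univ.filter (fun j => hB.eigenvalues j ≤ c') with hsB
  set W := Submodule.span ℝ (⇑hA.eigenvectorBasis '' ↑sA) with hW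
  set Z := Submodule.span ℝ (⇑hB.eigenvectorBasis '' ↑sB) with hZ
  have hWrank : Module.finrank ℝ W = sA.card := aux_finrank_span_onb _ _
  have hZrank : Module.finrank ℝ Z = sB.card := aux_finrank_span_onb _ _
  have hdim : Module.finrank ℝ (EuclideanSpace ℝ (Fin n))
      < Module.finrank ℝ W + Module.finrank ℝ Z := by
    rw [hWrank, hZrank, finrank_euclideanSpace_fin]
    omega
  obtain ⟨x, hx0, hxW, hxZ⟩ := aux_exists_ne_zero_mem_inf W Z hdim
  -- positivity of the norm
  have hS : 0 < ∑ j, x j * x j := by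
    have hex : ∃ j, x j ≠ 0 := by
      by_contra hcon
      push_neg at hcon
      exact hx0 (by ext j; exact hcon j)
    obtain ⟨j0, hj0⟩ := hex
    refine Finset.sum_pos' (fun j _ => mul_self_nonneg _) ⟨j0, Finset.mem_univ _, ?_⟩
    exact mul_self_pos.mpr hj0
  -- Rayleigh bounds
  have hlow : c * (∑ j, x j * x j) ≤ ∑ j, x j * (A *ᵥ ⇑x) j :=
    aux_rayleigh_span_ge A hA.eigenvectorBasis hA.eigenvalues
      (fun j => hA.mulVec_eigenvectorBasis j) sA c
      (fun j hj => (Finset.mem_filter.mp hj).2) x hxW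
  have hmid : ∑ j, x j * (A *ᵥ ⇑x) j ≤ ∑ j, x j * (B *ᵥ ⇑x) j :=
    aux_distLap_quad_mono hle hG' ⇑x
  have hhigh : ∑ j, x j * (B *ᵥ ⇑x) j ≤ c' * (∑ j, x j * x j) := by
    have hneg : ∀ j, (-B) *ᵥ ⇑(hB.eigenvectorBasis j)
        = (-(hB.eigenvalues j)) • ⇑(hB.eigenvectorBasis j) := by
      intro j
      rw [Matrix.neg_mulVec, hB.mulVec_eigenvectorBasis j, neg_smul]
    have := aux_rayleigh_span_ge (-B) hB.eigenvectorBasis (fun j => -(hB.eigenvalues j))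
      hneg sB (-c')
      (fun j hj => neg_le_neg ((Finset.mem_filter.mp hj).2)) x hxZ
    have heq : ∑ j, x j * ((-B) *ᵥ ⇑x) j = -(∑ j, x j * (B *ᵥ ⇑x) j) := by
      rw [Matrix.neg_mulVec, ← Finset.sum_neg_distrib]
      exact Finset.sum_congr rfl fun j _ => by simp [mul_neg]
    rw [heq] at this
    linarith
  have hfinal : c * (∑ j, x j * x j) ≤ c' * (∑ j, x j * x j) := by linarith
  nlinarith [hfinal, hS]
end
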